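/- For any pair of probability distributions (P1,P2) on a finite alphabet X: (i) the map α ↦ GJS(P1,P2,α) is nondecreasing on (0,∞); (ii) lim_{α↓0} GJS(P1,P2,α) = 0; and (iii) lim_{α→∞} GJS(P1,P2,α) = D(P2‖P1), where the equality in (iii) is in the extended reals [0,∞] and D denotes the Kullback–Leibler divergence. -/

import Mathlib

open Filter Topology MeasureTheory

namespace Classification

variable {X : Type*} [Fintype X] [DecidableEq X]

/-- `P` is a probability mass function on the finite alphabet `X`. -/
def IsDist (P : X → ℝ) : Prop := (∀ x, 0 ≤ P x) ∧ ∑ x, P x = 1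

/-- `P` has full support. -/
def FullSupport (P : X → ℝ) : Prop := ∀ x, 0 < P x

/-- Empirical distribution (type) of a sequence `x : Fin m → X`. -/
noncomputable def empDist {m : ℕ} (x : Fin m → X) : X → ℝ :=
  fun a => ((Finset.univ.filter fun i => x i = a).card : ℝ) / m

/-- Real-valued KL divergence with the usual `0 · log 0 = 0` convention. -/
noncomputable def klDivR (Q P : X → ℝ) : ℝ := ∑ x, Q x * Real.log (Q x / P x)

open Classical in
/-- Extended-real-valued KL divergence: `⊤` when `Q` is not absolutely continuous w.r.t. `P`. -/
noncomputable def klDivE (Q P : X → ℝ) : EReal :=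
  if ∀ x, P x = 0 → Q x = 0 then ((klDivR Q P : ℝ) : EReal) else ⊤

/-- The mixture `(α P1 + P2) / (1 + α)`. -/
noncomputable def mix (P1 P2 : X → ℝ) (α : ℝ) : X → ℝ :=
  fun x => (α * P1 x + P2 x) / (1 + α)

/-- Generalized Jensen–Shannon divergence
`GJS(P1,P2,α) = α D(P1 ‖ (αP1+P2)/(1+α)) + D(P2 ‖ (αP1+P2)/(1+α))`. -/
noncomputable def GJS (P1 P2 : X → ℝ) (α : ℝ) : ℝ :=
  α * klDivR P1 (mix P1 P2 α) + klDivR P2 (mix P1 P2 α)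

/-- Training sequence length `N = ⌈α n⌉`. -/
noncomputable def trainLen (α : ℝ) (n : ℕ) : ℕ := ⌈α * (n : ℝ)⌉₊

/-- Probability of observing the sequence `x` under i.i.d. sampling from `P`. -/
noncomputable def seqProb (P : X → ℝ) {m : ℕ} (x : Fin m → X) : ℝ := ∏ i, P (x i)

/-- A binary classification test: output `true` means "declare H₂",
`false` means "declare H₁". -/
abbrev BTest (X : Type*) (α : ℝ) (n : ℕ) : Type _ :=
  (Fin (trainLen α n) → X) → (Fin (trainLen α n) → X) → (Fin n → X) → Bool

/-- Type-I error probability: probability of declaring `H₂` when `Y^n ~ P1` (hypothesis H₁). -/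
noncomputable def beta1 {α : ℝ} {n : ℕ} (φ : BTest X α n) (P1 P2 : X → ℝ) : ℝ :=
  ∑ x1 : Fin (trainLen α n) → X, ∑ x2 : Fin (trainLen α n) → X, ∑ y : Fin n → X,
    if φ x1 x2 y = true then seqProb P1 x1 * seqProb P2 x2 * seqProb P1 y else 0

/-- Type-II error probability: probability of declaring `H₁` when `Y^n ~ P2` (hypothesis H₂). -/
noncomputable def beta2 {α : ℝ} {n : ℕ} (φ : BTest X α n) (P1 P2 : X → ℝ) : ℝ :=
  ∑ x1 : Fin (trainLen α n) → X, ∑ x2 : Fin (trainLen α n) → X, ∑ y : Fin n → X,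
    if φ x1 x2 y = false then seqProb P1 x1 * seqProb P2 x2 * seqProb P2 y else 0

open Classical in
/-- Gutman's test with threshold `lam`: declare `H₁` iff `GJS(T̂_{x₁}, T̂_y, α) ≤ lam`. -/
noncomputable def gutman (α lam : ℝ) (n : ℕ) : BTest X α n :=
  fun x1 _ y => if GJS (empDist x1) (empDist y) α ≤ lam then false else true

open Classical in
/-- `- log x` as an extended real, with `⊤` at `x = 0`. -/
noncomputable def negLogE (x : ℝ) : EReal :=
  if x = 0 then ⊤ else ((-Real.log x : ℝ) : EReal)

/-- Gutman's exponent function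
`F(P1,P2,α,lam) = min { α D(Q1‖P1) + D(Q2‖P2) : GJS(Q1,Q2,α) ≤ lam }` (as an inf in `EReal`). -/
noncomputable def Fexp (P1 P2 : X → ℝ) (α lam : ℝ) : EReal :=
  sInf {v : EReal | ∃ Q1 Q2 : X → ℝ, IsDist Q1 ∧ IsDist Q2 ∧ GJS Q1 Q2 α ≤ lam ∧
    v = (α : EReal) * klDivE Q1 P1 + klDivE Q2 P2}

/-- Expectation of `f` under `P`. -/
noncomputable def expect (P : X → ℝ) (f : X → ℝ) : ℝ := ∑ x, P x * f x

/-- Variance of `f` under `P`. -/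
noncomputable def varD (P : X → ℝ) (f : X → ℝ) : ℝ :=
  expect P (fun x => (f x - expect P f) ^ 2)

/-- Information density `ı₁(x) = log((1+α) P1(x) / (α P1(x) + P2(x)))`. -/
noncomputable def iDens1 (P1 P2 : X → ℝ) (α : ℝ) (x : X) : ℝ :=
  Real.log ((1 + α) * P1 x / (α * P1 x + P2 x))

/-- Information density `ı₂(x) = log((1+α) P2(x) / (α P1(x) + P2(x)))`. -/
noncomputable def iDens2 (P1 P2 : X → ℝ) (α : ℝ) (x : X) : ℝ :=
  Real.log ((1 + α) * P2 x / (α * P1 x + P2 x))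

/-- The dispersion `V(P1,P2,α) = α Var_{P1}[ı₁] + Var_{P2}[ı₂]`. -/
noncomputable def disp (P1 P2 : X → ℝ) (α : ℝ) : ℝ :=
  α * varD P1 (iDens1 P1 P2 α) + varD P2 (iDens2 P1 P2 α)

/-- The standard Gaussian cumulative distribution function `Φ`. -/
noncomputable def stdCDF (x : ℝ) : ℝ :=
  (Real.sqrt (2 * Real.pi))⁻¹ * ∫ t in Set.Iic x, Real.exp (-t ^ 2 / 2)

/-- The inverse standard Gaussian cdf `Φ⁻¹`. -/
noncomputable def stdCDFInv (p : ℝ) : ℝ := sInf {x : ℝ | p ≤ stdCDF x}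

/-- The non-asymptotic fundamental limit `λ*(n, α, ε | P1, P2)` for binary classification. -/
noncomputable def lamStar (α : ℝ) (n : ℕ) (ε : ℝ) (P1 P2 : X → ℝ) : ℝ :=
  sSup {lam : ℝ | 0 ≤ lam ∧ ∃ φ : BTest X α n,
    (∀ Q1 Q2 : X → ℝ, IsDist Q1 → IsDist Q2 →
      beta1 φ Q1 Q2 ≤ Real.exp (-((n : ℝ) * lam))) ∧
    beta2 φ P1 P2 ≤ ε}

/-- Rényi divergence of order `γ`. -/
noncomputable def renyi (γ : ℝ) (P1 P2 : X → ℝ) : ℝ :=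
  (1 / (γ - 1)) * Real.log (∑ x, P1 x ^ γ * P2 x ^ (1 - γ))

/-- The fundamental limit `τ*(n, α, ε | φ_n^Gut, P1, P2)` in the dual setting for Gutman's test. -/
noncomputable def tauStarGut (α : ℝ) (n : ℕ) (ε : ℝ) (P1 P2 : X → ℝ) : ℝ :=
  sSup {τ : ℝ | 0 ≤ τ ∧ ∃ lam : ℝ, 0 ≤ lam ∧
    (∀ Q1 Q2 : X → ℝ, IsDist Q1 → IsDist Q2 →
      beta1 (gutman α lam n) Q1 Q2 ≤ ε) ∧
    beta2 (gutman α lam n) P1 P2 ≤ Real.exp (-((n : ℝ) * τ))}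

/-- A two-sample homogeneity test: `true` means "declare H₂" (different distributions). -/
abbrev TTest (X : Type*) (α : ℝ) (n : ℕ) : Type _ :=
  (Fin (trainLen α n) → X) → (Fin n → X) → Bool

/-- False-alarm probability of a two-sample test. -/
noncomputable def betaFA {α : ℝ} {n : ℕ} (φ : TTest X α n) (P1 : X → ℝ) : ℝ :=
  ∑ x : Fin (trainLen α n) → X, ∑ y : Fin n → X,
    if φ x y = true then seqProb P1 x * seqProb P1 y else 0

/-- Miss-detection probability of a two-sample test. -/
noncomputable def betaMD {α : ℝ} {n : ℕ} (φ : TTest X α n) (P1 P2 : X → ℝ) : ℝ :=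
  ∑ x : Fin (trainLen α n) → X, ∑ y : Fin n → X,
    if φ x y = false then seqProb P1 x * seqProb P2 y else 0

/-- The fundamental limit `ξ*(n, α, ε | P1, P2)` for two-sample homogeneity testing. -/
noncomputable def xiStar (α : ℝ) (n : ℕ) (ε : ℝ) (P1 P2 : X → ℝ) : ℝ :=
  sSup {lam : ℝ | 0 ≤ lam ∧ ∃ φ : TTest X α n,
    (∀ Q1 : X → ℝ, IsDist Q1 → betaFA φ Q1 ≤ Real.exp (-((n : ℝ) * lam))) ∧
    betaMD φ P1 P2 ≤ ε}

/-- An M-ary classification test with the rejection option: `some j` means "declare H_j",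
`none` means "reject". -/
abbrev MTest (X : Type*) (M : ℕ) (α : ℝ) (n : ℕ) : Type _ :=
  (Fin M → Fin (trainLen α n) → X) → (Fin n → X) → Option (Fin M)

/-- Type-`j` error probability: probability of declaring some hypothesis other than
`H_j` or rejection, under `H_j`. -/
noncomputable def betaM {M : ℕ} {α : ℝ} {n : ℕ} (ψ : MTest X M α n)
    (P : Fin M → X → ℝ) (j : Fin M) : ℝ :=
  ∑ xs : Fin M → Fin (trainLen α n) → X, ∑ y : Fin n → X,
    if ψ xs y ≠ some j ∧ ψ xs y ≠ none then
      (∏ i, seqProb (P i) (xs i)) * seqProb (P j) y else 0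

/-- Type-`j` rejection probability: probability of rejecting under `H_j`. -/
noncomputable def zetaM {M : ℕ} {α : ℝ} {n : ℕ} (ψ : MTest X M α n)
    (P : Fin M → X → ℝ) (j : Fin M) : ℝ :=
  ∑ xs : Fin M → Fin (trainLen α n) → X, ∑ y : Fin n → X,
    if ψ xs y = none then (∏ i, seqProb (P i) (xs i)) * seqProb (P j) y else 0

/-- The fundamental limit `λ*(n, α, ε | P)` for M-ary classification with rejection. -/
noncomputable def lamStarM (M : ℕ) (α : ℝ) (n : ℕ) (ε : Fin M → ℝ)
    (P : Fin M → X → ℝ) : ℝ :=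
  sSup {lam : ℝ | 0 ≤ lam ∧ ∃ ψ : MTest X M α n,
    (∀ Q : Fin M → X → ℝ, (∀ i, IsDist (Q i)) → ∀ j,
      betaM ψ Q j ≤ Real.exp (-((n : ℝ) * lam))) ∧
    (∀ j, zetaM ψ P j ≤ ε j)}

open Classical in
/-- Gutman's M-ary test with rejection and threshold `lam`. -/
noncomputable def gutmanM (M : ℕ) [NeZero M] (α lam : ℝ) (n : ℕ) : MTest X M α n :=
  fun xs y =>
    if ∃ i k : Fin M, i ≠ k ∧ GJS (empDist (xs i)) (empDist y) α ≤ lam ∧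
        GJS (empDist (xs k)) (empDist y) α ≤ lam then none
    else if h : ∃ j : Fin M, GJS (empDist (xs j)) (empDist y) α ≤ lam then some h.choose
    else some 0

/-- The fundamental limit `τ*(n, α, ε | Ψ_n^Gut, P)` in the dual setting for
Gutman's M-ary test. -/
noncomputable def tauStarGutM (M : ℕ) [NeZero M] (α : ℝ) (n : ℕ) (ε : ℝ)
    (P : Fin M → X → ℝ) : ℝ :=
  sSup {τ : ℝ | 0 ≤ τ ∧ ∃ lam : ℝ, 0 ≤ lam ∧
    (∀ Q : Fin M → X → ℝ, (∀ i, IsDist (Q i)) → ∀ j,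
      betaM (gutmanM M α lam n) Q j ≤ ε) ∧
    (∀ j, zetaM (gutmanM M α lam n) P j ≤ Real.exp (-((n : ℝ) * τ)))}

/-- Generalized divergence of three distributions
`D_γ(P1,P2,P3) = (γ-1)⁻¹ log Σ_x P1(x)^{1-γ} P2(x)^{γ/2} P3(x)^{γ/2}`. -/
noncomputable def genDiv (γ : ℝ) (P1 P2 P3 : X → ℝ) : ℝ :=
  (1 / (γ - 1)) * Real.log (∑ x, P1 x ^ (1 - γ) * P2 x ^ (γ / 2) * P3 x ^ (γ / 2))

/-- A binary classification test with the rejection option: `some 0` means "declare H₁",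
`some 1` means "declare H₂", `none` means "reject". -/
abbrev RTest (X : Type*) (α : ℝ) (n : ℕ) : Type _ :=
  (Fin (trainLen α n) → X) → (Fin (trainLen α n) → X) → (Fin n → X) → Option (Fin 2)

/-- Type-1 error probability of a rejection test: declare `H₂` under `H₁`. -/
noncomputable def beta1R {α : ℝ} {n : ℕ} (ψ : RTest X α n) (P1 P2 : X → ℝ) : ℝ :=
  ∑ x1 : Fin (trainLen α n) → X, ∑ x2 : Fin (trainLen α n) → X, ∑ y : Fin n → X,
    if ψ x1 x2 y = some 1 then seqProb P1 x1 * seqProb P2 x2 * seqProb P1 y else 0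

/-- Type-2 error probability of a rejection test: declare `H₁` under `H₂`. -/
noncomputable def beta2R {α : ℝ} {n : ℕ} (ψ : RTest X α n) (P1 P2 : X → ℝ) : ℝ :=
  ∑ x1 : Fin (trainLen α n) → X, ∑ x2 : Fin (trainLen α n) → X, ∑ y : Fin n → X,
    if ψ x1 x2 y = some 0 then seqProb P1 x1 * seqProb P2 x2 * seqProb P2 y else 0

open Classical in
/-- Type-`j` rejection probability of a binary rejection test. -/
noncomputable def zetaR {α : ℝ} {n : ℕ} (ψ : RTest X α n) (P1 P2 : X → ℝ) (j : Fin 2) : ℝ :=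
  ∑ x1 : Fin (trainLen α n) → X, ∑ x2 : Fin (trainLen α n) → X, ∑ y : Fin n → X,
    if ψ x1 x2 y = none then
      seqProb P1 x1 * seqProb P2 x2 * seqProb (if j = 0 then P1 else P2) y else 0

/-- A binary test is type-based if it depends on the data only through the
triple of empirical distributions. -/
def TypeBasedB {α : ℝ} {n : ℕ} (φ : BTest X α n) : Prop :=
  ∀ x1 x1' x2 x2' : Fin (trainLen α n) → X, ∀ y y' : Fin n → X,
    empDist x1 = empDist x1' → empDist x2 = empDist x2' → empDist y = empDist y' →
      φ x1 x2 y = φ x1' x2' y'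

/-- An M-ary test is type-based if it depends on the data only through the
tuple of empirical distributions. -/
def TypeBasedM {M : ℕ} {α : ℝ} {n : ℕ} (ψ : MTest X M α n) : Prop :=
  ∀ xs xs' : Fin M → Fin (trainLen α n) → X, ∀ y y' : Fin n → X,
    (∀ i, empDist (xs i) = empDist (xs' i)) → empDist y = empDist y' →
      ψ xs y = ψ xs' y'

open Classical in
/-- Probability of an event under hypothesis `H₂` in the binary setup. -/
noncomputable def prH2E (α : ℝ) (n : ℕ) (P1 P2 : X → ℝ)
    (E : (Fin (trainLen α n) → X) → (Fin (trainLen α n) → X) → (Fin n → X) → Prop) : ℝ :=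
  ∑ x1 : Fin (trainLen α n) → X, ∑ x2 : Fin (trainLen α n) → X, ∑ y : Fin n → X,
    if E x1 x2 y then seqProb P1 x1 * seqProb P2 x2 * seqProb P2 y else 0

open Classical in
/-- Probability of an event under hypothesis `H_j` in the M-ary setup. -/
noncomputable def prHjM (M : ℕ) (α : ℝ) (n : ℕ) (P : Fin M → X → ℝ) (j : Fin M)
    (E : (Fin M → Fin (trainLen α n) → X) → (Fin n → X) → Prop) : ℝ :=
  ∑ xs : Fin M → Fin (trainLen α n) → X, ∑ y : Fin n → X,
    if E xs y then (∏ i, seqProb (P i) (xs i)) * seqProb (P j) y else 0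

/-- `η_n(α) = |X| log(n+1)/n + 2|X| log(1+αn)/(αn)`. -/
noncomputable def etaN (X : Type*) [Fintype X] (α : ℝ) (n : ℕ) : ℝ :=
  (Fintype.card X : ℝ) * Real.log ((n : ℝ) + 1) / n +
    2 * (Fintype.card X : ℝ) * Real.log (1 + α * n) / (α * n)

/-- `η_{n,M} = M |X| log(nα+1)/(nα) + |X| log(n+1)/n`. -/
noncomputable def etaNM (X : Type*) [Fintype X] (M : ℕ) (α : ℝ) (n : ℕ) : ℝ :=
  (M : ℝ) * (Fintype.card X : ℝ) * Real.log ((n : ℝ) * α + 1) / ((n : ℝ) * α) +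
    (Fintype.card X : ℝ) * Real.log ((n : ℝ) + 1) / n

/-- `Q` is an `m`-type: the empirical distribution of some sequence of length `m`. -/
def IsTypeDist (m : ℕ) (Q : X → ℝ) : Prop := ∃ x : Fin m → X, empDist x = Q

/-- The type-restricted exponent function `F_n`. -/
noncomputable def Fn (n : ℕ) (P1 P2 : X → ℝ) (α lam : ℝ) : ℝ :=
  sInf {v : ℝ | ∃ Q1 Q2 : X → ℝ, IsTypeDist (trainLen α n) Q1 ∧ IsTypeDist n Q2 ∧
    GJS Q1 Q2 α ≤ lam ∧ v = α * klDivR Q1 P1 + klDivR Q2 P2}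

/-- The second smallest value of a finite family of reals:
`min_{i ≠ j} max (v i) (v j)`. -/
noncomputable def secondMin {M : ℕ} (v : Fin M → ℝ) : ℝ :=
  sInf {t : ℝ | ∃ i j : Fin M, i ≠ j ∧ t = max (v i) (v j)}

/-- The tilted distribution `P^{(γ)}` with `γ = α/(1+α)`. -/
noncomputable def tilt (α : ℝ) (P1 P2 : X → ℝ) : X → ℝ :=
  fun x => P1 x ^ (α / (1 + α)) * P2 x ^ (1 / (1 + α)) /
    ∑ a, P1 a ^ (α / (1 + α)) * P2 a ^ (1 / (1 + α))


section GJSAux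

private lemma gibbs_term {q m : ℝ} (hq : 0 ≤ q) (hm : 0 ≤ m) (h : m = 0 → q = 0) :
    q - m ≤ q * Real.log (q / m) := by
  rcases eq_or_lt_of_le hq with h0 | h0
  · simp [← h0]; linarith
  · have hm0 : 0 < m := by
      rcases eq_or_lt_of_le hm with h1 | h1
      · exact absurd (h h1.symm) h0.ne'
      · exact h1
    have ht : 0 < q / m := by positivity
    have hlog := Real.one_sub_inv_le_log_of_pos ht
    have h2 : q * (1 - (q / m)⁻¹) ≤ q * Real.log (q / m) :=
      mul_le_mul_of_nonneg_left hlog h0.le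
    have h3 : q * (1 - (q / m)⁻¹) = q - m := by
      rw [inv_div]; field_simp
    linarith

private lemma klDivR_ge_sub {X : Type*} [Fintype X] (Q P : X → ℝ)
    (hQ : ∀ x, 0 ≤ Q x) (hP : ∀ x, 0 ≤ P x) (hac : ∀ x, P x = 0 → Q x = 0) :
    (∑ x, Q x) - (∑ x, P x) ≤ klDivR Q P := by
  rw [klDivR, ← Finset.sum_sub_distrib]
  exact Finset.sum_le_sum fun x _ => gibbs_term (hQ x) (hP x) (hac x)

private lemma mix_nonneg' {X : Type*} [Fintype X] {P1 P2 : X → ℝ}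
    (h1 : ∀ x, 0 ≤ P1 x) (h2 : ∀ x, 0 ≤ P2 x) {a : ℝ} (ha : 0 < a) (x : X) :
    0 ≤ mix P1 P2 a x := by
  unfold mix
  apply div_nonneg _ (by linarith)
  nlinarith [h1 x, h2 x]

private lemma mix_sum' {X : Type*} [Fintype X] {P1 P2 : X → ℝ}
    (h1 : ∑ x, P1 x = 1) (h2 : ∑ x, P2 x = 1) {a : ℝ} (ha : 0 < a) :
    ∑ x, mix P1 P2 a x = 1 := by
  unfold mix
  rw [← Finset.sum_div, Finset.sum_add_distrib, ← Finset.mul_sum, h1, h2]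
  field_simp
  ring

private lemma mix_eq_zero' {X : Type*} [Fintype X] {P1 P2 : X → ℝ}
    (h1 : ∀ x, 0 ≤ P1 x) (h2 : ∀ x, 0 ≤ P2 x) {a : ℝ} (ha : 0 < a) {x : X}
    (hx : mix P1 P2 a x = 0) : P1 x = 0 ∧ P2 x = 0 := by
  unfold mix at hx
  have hne : (1 : ℝ) + a ≠ 0 := by positivity
  have hz : a * P1 x + P2 x = 0 := by
    field_simp at hx
    simpa using hx
  constructor <;> nlinarith [h1 x, h2 x]

private lemma log_split {p m Q : ℝ} (hp : 0 ≤ p) (hm : 0 < m) (hQ : 0 < Q) :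
    p * Real.log (p / Q) = p * Real.log (p / m) + p * Real.log (m / Q) := by
  rcases eq_or_lt_of_le hp with h0 | h0
  · simp [← h0]
  · rw [← mul_add, ← Real.log_mul (by positivity) (by positivity), div_mul_div_comm,
      mul_comm p m, mul_div_mul_left _ _ hm.ne']

private lemma term_split {a p q Q : ℝ} (ha : 0 < a) (hp : 0 ≤ p) (hq : 0 ≤ q)
    (hQ0 : 0 ≤ Q) (hac : Q = 0 → p = 0 ∧ q = 0) :
    a * (p * Real.log (p / Q)) + q * Real.log (q / Q) =
      a * (p * Real.log (p / ((a * p + q) / (1 + a)))) +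
        q * Real.log (q / ((a * p + q) / (1 + a))) +
        (1 + a) * ((a * p + q) / (1 + a) * Real.log ((a * p + q) / (1 + a) / Q)) := by
  have h1a : (0 : ℝ) < 1 + a := by linarith
  by_cases hpq : p = 0 ∧ q = 0
  · obtain ⟨e1, e2⟩ := hpq; simp [e1, e2]
  · have hQ : 0 < Q := lt_of_le_of_ne hQ0 (fun h => hpq (hac h.symm))
    have hnum : 0 < a * p + q := by
      rcases not_and_or.mp hpq with h | h
      · have : 0 < p := lt_of_le_of_ne hp (Ne.symm h)
        nlinarith
      · have : 0 < q := lt_of_le_of_ne hq (Ne.symm h)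
        nlinarith
    have hm : 0 < (a * p + q) / (1 + a) := by positivity
    rw [log_split hp hm hQ, log_split hq hm hQ]
    have hmm : (1 + a) * ((a * p + q) / (1 + a) * Real.log ((a * p + q) / (1 + a) / Q)) =
        (a * p + q) * Real.log ((a * p + q) / (1 + a) / Q) := by
      rw [← mul_assoc, mul_div_cancel₀ _ h1a.ne']
    rw [hmm]; ring

private lemma GJS_decomp {X : Type*} [Fintype X] (P1 P2 Q : X → ℝ) {a : ℝ} (ha : 0 < a)
    (h1 : ∀ x, 0 ≤ P1 x) (h2 : ∀ x, 0 ≤ P2 x) (hQ : ∀ x, 0 ≤ Q x)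
    (hac : ∀ x, Q x = 0 → P1 x = 0 ∧ P2 x = 0) :
    a * klDivR P1 Q + klDivR P2 Q = GJS P1 P2 a + (1 + a) * klDivR (mix P1 P2 a) Q := by
  unfold GJS klDivR mix
  rw [Finset.mul_sum, Finset.mul_sum, Finset.mul_sum, ← Finset.sum_add_distrib,
    ← Finset.sum_add_distrib, ← Finset.sum_add_distrib]
  exact Finset.sum_congr rfl fun x _ => term_split ha (h1 x) (h2 x) (hQ x) (hac x)

private lemma tendsto_aux (c d : ℝ) (hc : 0 < c) :
    Filter.Tendsto (fun α : ℝ => α / (c * α + d)) Filter.atTop (nhds c⁻¹) := by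
  have h1 : Filter.Tendsto (fun α : ℝ => c + d * α⁻¹) Filter.atTop (nhds c) := by
    simpa using tendsto_const_nhds.add (tendsto_inv_atTop_zero.const_mul d)
  have h2 := h1.inv₀ hc.ne'
  apply h2.congr'
  filter_upwards [Filter.eventually_gt_atTop 0] with α hα
  have : c + d * α⁻¹ = (c * α + d) / α := by field_simp
  rw [this, inv_div]

private lemma tendsto_term {p q : ℝ} (hp : 0 ≤ p) (hq : 0 ≤ q) (hac : p = 0 → q = 0) :
    Filter.Tendsto (fun α : ℝ =>
        α * (p * Real.log (p / ((α * p + q) / (1 + α)))) +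
          q * Real.log (q / ((α * p + q) / (1 + α)))) Filter.atTop
      (nhds ((p - q) + q * Real.log (q / p))) := by
  rcases eq_or_lt_of_le hp with h0 | h0
  · have hq0 : q = 0 := hac h0.symm
    simp only [← h0, hq0, zero_mul, mul_zero, add_zero, zero_add, sub_zero, sub_self]
    simpa using tendsto_const_nhds
  · -- p > 0
    simp only [div_div_eq_mul_div]
    have part1 : Filter.Tendsto (fun α : ℝ => α * (p * Real.log (p * (1 + α) / (α * p + q))))
        Filter.atTop (nhds (p - q)) := by
      have hlim_low : Filter.Tendsto (fun α : ℝ => α * (p * ((p - q) / (p * (1 + α)))))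
          Filter.atTop (nhds (p - q)) := by
        have := (tendsto_aux p p h0).const_mul (p * (p - q))
        have hval : p * (p - q) * p⁻¹ = p - q := by field_simp
        rw [hval] at this
        apply this.congr
        intro α; ring
      have hlim_up : Filter.Tendsto (fun α : ℝ => α * (p * ((p - q) / (α * p + q))))
          Filter.atTop (nhds (p - q)) := by
        have := (tendsto_aux p q h0).const_mul (p * (p - q))
        have hval : p * (p - q) * p⁻¹ = p - q := by field_simp
        rw [hval] at this
        apply this.congr
        intro α; ring
      apply tendsto_of_tendsto_of_tendsto_of_le_of_le' hlim_low hlim_up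
      · filter_upwards [Filter.eventually_gt_atTop 0] with α hα
        have h1α : (0 : ℝ) < 1 + α := by linarith
        have hd : 0 < α * p + q := by nlinarith
        have hr : 0 < p * (1 + α) / (α * p + q) := by positivity
        have hlb := Real.one_sub_inv_le_log_of_pos hr
        have hinv : (p * (1 + α) / (α * p + q))⁻¹ = (α * p + q) / (p * (1 + α)) := inv_div _ _
        have heq : 1 - (α * p + q) / (p * (1 + α)) = (p - q) / (p * (1 + α)) := by
          rw [one_sub_div (by positivity)]; congr 1; ring
        rw [hinv, heq] at hlb
        have := mul_le_mul_of_nonneg_left (mul_le_mul_of_nonneg_left hlb hp) hα.le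
        linarith
      · filter_upwards [Filter.eventually_gt_atTop 0] with α hα
        have h1α : (0 : ℝ) < 1 + α := by linarith
        have hd : 0 < α * p + q := by nlinarith
        have hr : 0 < p * (1 + α) / (α * p + q) := by positivity
        have hub := Real.log_le_sub_one_of_pos hr
        have heq : p * (1 + α) / (α * p + q) - 1 = (p - q) / (α * p + q) := by
          rw [div_sub_one hd.ne']; congr 1; ring
        rw [heq] at hub
        have := mul_le_mul_of_nonneg_left (mul_le_mul_of_nonneg_left hub hp) hα.le
        linarith
    have part2 : Filter.Tendsto (fun α : ℝ => q * Real.log (q * (1 + α) / (α * p + q)))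
        Filter.atTop (nhds (q * Real.log (q / p))) := by
      rcases eq_or_lt_of_le hq with hq0 | hq0
      · simp [← hq0]
      · have hinf : Filter.Tendsto (fun α : ℝ => α * p + q) Filter.atTop Filter.atTop := by
          apply Filter.tendsto_atTop_add_const_right
          exact Filter.Tendsto.atTop_mul_const h0 Filter.tendsto_id
        have hz : Filter.Tendsto (fun α : ℝ => (α * p + q)⁻¹) Filter.atTop (nhds 0) :=
          hinf.inv_tendsto_atTop
        have hcore : Filter.Tendsto (fun α : ℝ => q * (1 + α) / (α * p + q))
            Filter.atTop (nhds (q / p)) := by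
          have := ((tendsto_aux p q h0).add hz).const_mul q
          have hval : q * (p⁻¹ + 0) = q / p := by rw [add_zero, div_eq_mul_inv]
          rw [hval] at this
          apply this.congr
          intro α; ring
        exact (hcore.log (by positivity : q / p ≠ 0)).const_mul q
    exact part1.add part2

end GJSAux

/-- properties of the generalized Jensen–Shannon divergence:
(i) `α ↦ GJS(P1,P2,α)` is nondecreasing on `(0,∞)`;
(ii) `GJS(P1,P2,α) → 0` as `α ↓ 0`;
(iii) `GJS(P1,P2,α) → D(P2‖P1)` (in the extended reals) as `α → ∞`. -/
theorem GJS_properties {X : Type*} [Fintype X] [DecidableEq X]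
    (P1 P2 : X → ℝ) (h1 : IsDist P1) (h2 : IsDist P2) :
    (∀ a b : ℝ, 0 < a → a ≤ b → GJS P1 P2 a ≤ GJS P1 P2 b) ∧
    Filter.Tendsto (fun α : ℝ => GJS P1 P2 α) (nhdsWithin 0 (Set.Ioi 0)) (nhds 0) ∧
    Filter.Tendsto (fun α : ℝ => ((GJS P1 P2 α : ℝ) : EReal)) Filter.atTop
      (nhds (klDivE P2 P1)) := by
  obtain ⟨h1n, h1s⟩ := h1
  obtain ⟨h2n, h2s⟩ := h2
  have hkl_nonneg : ∀ a : ℝ, 0 < a → 0 ≤ klDivR P1 (mix P1 P2 a) ∧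
      0 ≤ klDivR P2 (mix P1 P2 a) := by
    intro a ha
    have hms := mix_sum' h1s h2s ha
    have hmn := mix_nonneg' h1n h2n ha
    constructor
    · have := klDivR_ge_sub P1 (mix P1 P2 a) h1n hmn
        (fun x hx => (mix_eq_zero' h1n h2n ha hx).1)
      rw [h1s, hms] at this; linarith
    · have := klDivR_ge_sub P2 (mix P1 P2 a) h2n hmn
        (fun x hx => (mix_eq_zero' h1n h2n ha hx).2)
      rw [h2s, hms] at this; linarith
  refine ⟨?_, ?_, ?_⟩
  · -- monotonicity
    intro a b ha hab
    have hb : 0 < b := lt_of_lt_of_le ha hab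
    have hQn := mix_nonneg' h1n h2n hb
    have hQs := mix_sum' h1s h2s hb
    have hac : ∀ x, mix P1 P2 b x = 0 → P1 x = 0 ∧ P2 x = 0 :=
      fun x hx => mix_eq_zero' h1n h2n hb hx
    have key := GJS_decomp P1 P2 (mix P1 P2 b) ha h1n h2n hQn hac
    have d1 : 0 ≤ klDivR P1 (mix P1 P2 b) := (hkl_nonneg b hb).1
    have dm : 0 ≤ klDivR (mix P1 P2 a) (mix P1 P2 b) := by
      have := klDivR_ge_sub (mix P1 P2 a) (mix P1 P2 b) (mix_nonneg' h1n h2n ha) hQn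
        (fun x hx => by
          obtain ⟨e1, e2⟩ := hac x hx
          unfold mix
          rw [e1, e2, mul_zero, add_zero, zero_div])
      rw [mix_sum' h1s h2s ha, hQs] at this; linarith
    have hGb : GJS P1 P2 b = b * klDivR P1 (mix P1 P2 b) + klDivR P2 (mix P1 P2 b) := rfl
    have h1a : (0:ℝ) ≤ 1 + a := by linarith
    nlinarith [mul_le_mul_of_nonneg_right hab d1, mul_nonneg h1a dm]
  · -- limit at 0+
    have hub : ∀ a : ℝ, 0 < a →
        GJS P1 P2 a ≤ a * Real.log (1 + a) - Real.log a * a + Real.log (1 + a) := by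
      intro a ha
      have h1a : (0:ℝ) < 1 + a := by linarith
      have hd2 : klDivR P2 (mix P1 P2 a) ≤ Real.log (1 + a) := by
        have : ∀ x, P2 x * Real.log (P2 x / mix P1 P2 a x) ≤ P2 x * Real.log (1 + a) := by
          intro x
          rcases eq_or_lt_of_le (h2n x) with h0 | h0
          · rw [← h0, zero_mul, zero_mul]
          · have hm : 0 < mix P1 P2 a x := by
              unfold mix
              apply div_pos _ h1a
              nlinarith [h1n x]
            apply mul_le_mul_of_nonneg_left _ (h2n x)
            apply Real.log_le_log (by positivity)
            rw [div_le_iff₀ hm]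
            unfold mix
            have hcan : (1 + a) * ((a * P1 x + P2 x) / (1 + a)) = a * P1 x + P2 x := by
              field_simp
            rw [hcan]
            nlinarith [h1n x]
        calc klDivR P2 (mix P1 P2 a) ≤ ∑ x, P2 x * Real.log (1 + a) :=
              Finset.sum_le_sum fun x _ => this x
          _ = Real.log (1 + a) := by rw [← Finset.sum_mul, h2s, one_mul]
      have hd1 : klDivR P1 (mix P1 P2 a) ≤ Real.log ((1 + a) / a) := by
        have hfrac : (1:ℝ) ≤ (1 + a) / a := by
          rw [le_div_iff₀ ha]; linarith
        have : ∀ x, P1 x * Real.log (P1 x / mix P1 P2 a x) ≤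
            P1 x * Real.log ((1 + a) / a) := by
          intro x
          rcases eq_or_lt_of_le (h1n x) with h0 | h0
          · rw [← h0, zero_mul, zero_mul]
          · have hm : 0 < mix P1 P2 a x := by
              unfold mix
              apply div_pos _ h1a
              nlinarith [h2n x]
            apply mul_le_mul_of_nonneg_left _ (h1n x)
            apply Real.log_le_log (by positivity)
            rw [div_le_div_iff₀ hm ha]
            unfold mix
            have hcan : (1 + a) * ((a * P1 x + P2 x) / (1 + a)) = a * P1 x + P2 x := by
              field_simp
            rw [hcan]
            nlinarith [h2n x]
        calc klDivR P1 (mix P1 P2 a) ≤ ∑ x, P1 x * Real.log ((1 + a) / a) :=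
              Finset.sum_le_sum fun x _ => this x
          _ = Real.log ((1 + a) / a) := by rw [← Finset.sum_mul, h1s, one_mul]
      have hlogdiv : Real.log ((1 + a) / a) = Real.log (1 + a) - Real.log a :=
        Real.log_div h1a.ne' ha.ne'
      have hGJS : GJS P1 P2 a = a * klDivR P1 (mix P1 P2 a) + klDivR P2 (mix P1 P2 a) := rfl
      have := mul_le_mul_of_nonneg_left hd1 ha.le
      rw [hlogdiv] at this
      nlinarith
    have hlow : ∀ a : ℝ, 0 < a → 0 ≤ GJS P1 P2 a := by
      intro a ha
      obtain ⟨d1, d2⟩ := hkl_nonneg a ha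
      have hGJS : GJS P1 P2 a = a * klDivR P1 (mix P1 P2 a) + klDivR P2 (mix P1 P2 a) := rfl
      nlinarith
    have tid : Filter.Tendsto (fun a : ℝ => a) (nhdsWithin 0 (Set.Ioi 0)) (nhds 0) :=
      Filter.Tendsto.mono_right tendsto_id nhdsWithin_le_nhds
    have t1 : Filter.Tendsto (fun a : ℝ => Real.log (1 + a)) (nhdsWithin 0 (Set.Ioi 0))
        (nhds 0) := by
      have h1p : Filter.Tendsto (fun a : ℝ => 1 + a) (nhdsWithin 0 (Set.Ioi 0)) (nhds 1) := by
        simpa using tendsto_const_nhds.add tid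
      simpa using h1p.log one_ne_zero
    have t2 : Filter.Tendsto (fun a : ℝ => a * Real.log (1 + a)) (nhdsWithin 0 (Set.Ioi 0))
        (nhds 0) := by
      simpa using tid.mul t1
    have t3 : Filter.Tendsto (fun a : ℝ => Real.log a * a) (nhdsWithin 0 (Set.Ioi 0))
        (nhds 0) := by
      have := tendsto_log_mul_rpow_nhdsGT_zero one_pos
      simpa [Real.rpow_one] using this
    have tupper : Filter.Tendsto
        (fun a : ℝ => a * Real.log (1 + a) - Real.log a * a + Real.log (1 + a))
        (nhdsWithin 0 (Set.Ioi 0)) (nhds 0) := by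
      simpa using (t2.sub t3).add t1
    apply tendsto_of_tendsto_of_tendsto_of_le_of_le' tendsto_const_nhds tupper
    · filter_upwards [self_mem_nhdsWithin] with a ha
      exact hlow a ha
    · filter_upwards [self_mem_nhdsWithin] with a ha
      exact hub a ha
  · -- limit at infinity
    by_cases hA : ∀ x, P1 x = 0 → P2 x = 0
    · rw [klDivE, if_pos hA, EReal.tendsto_coe]
      have hGJS : (fun α : ℝ => GJS P1 P2 α) = fun α : ℝ => ∑ x,
          (α * (P1 x * Real.log (P1 x / ((α * P1 x + P2 x) / (1 + α)))) +
            P2 x * Real.log (P2 x / ((α * P1 x + P2 x) / (1 + α)))) := by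
        funext α
        unfold GJS klDivR mix
        rw [Finset.mul_sum, ← Finset.sum_add_distrib]
      have hKL : klDivR P2 P1 = ∑ x, ((P1 x - P2 x) + P2 x * Real.log (P2 x / P1 x)) := by
        rw [Finset.sum_add_distrib, Finset.sum_sub_distrib, h1s, h2s, klDivR, sub_self,
          zero_add]
      rw [hKL]
      exact (tendsto_finset_sum _ fun x _ =>
        tendsto_term (h1n x) (h2n x) (hA x)).congr fun α => (congrFun hGJS α).symm
    · rw [klDivE, if_neg hA]
      push_neg at hA
      obtain ⟨x0, hx1, hx2⟩ := hA
      have hq0 : 0 < P2 x0 := lt_of_le_of_ne (h2n x0) (Ne.symm hx2)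
      have hT : Filter.Tendsto (fun α : ℝ => GJS P1 P2 α) Filter.atTop Filter.atTop := by
        have hlb : Filter.Tendsto (fun α : ℝ => P2 x0 * Real.log (1 + α) - P2 x0)
            Filter.atTop Filter.atTop := by
          have hgrow : Filter.Tendsto (fun α : ℝ => Real.log (1 + α))
              Filter.atTop Filter.atTop :=
            Real.tendsto_log_atTop.comp (Filter.tendsto_atTop_add_const_left _ 1
              Filter.tendsto_id)
          have := Filter.tendsto_atTop_add_const_right _ (-(P2 x0))
            (hgrow.const_mul_atTop hq0)
          apply this.congr
          intro α; ring
        apply Filter.tendsto_atTop_mono' Filter.atTop ?_ hlb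
        · filter_upwards [Filter.eventually_gt_atTop 0] with α hα
          have h1α : (0:ℝ) < 1 + α := by linarith
          obtain ⟨d1, _⟩ := hkl_nonneg α hα
          have hms := mix_sum' h1s h2s hα
          have hmn := mix_nonneg' h1n h2n hα
          have hm0 : mix P1 P2 α x0 = P2 x0 / (1 + α) := by
            unfold mix; rw [hx1, mul_zero, zero_add]
          have harg : P2 x0 / (P2 x0 / (1 + α)) = 1 + α := by
            rw [div_div_eq_mul_div, mul_comm, mul_div_assoc, div_self hq0.ne', mul_one]
          have hterm : P2 x0 * Real.log (P2 x0 / mix P1 P2 α x0) =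
              P2 x0 * Real.log (1 + α) := by
            rw [hm0, harg]
          have hsplit : klDivR P2 (mix P1 P2 α) =
              P2 x0 * Real.log (P2 x0 / mix P1 P2 α x0) +
                ∑ x ∈ Finset.univ.erase x0,
                  P2 x * Real.log (P2 x / mix P1 P2 α x) :=
            (Finset.add_sum_erase _ _ (Finset.mem_univ x0)).symm
          have hrest : ∑ x ∈ Finset.univ.erase x0, (P2 x - mix P1 P2 α x) ≤
              ∑ x ∈ Finset.univ.erase x0, P2 x * Real.log (P2 x / mix P1 P2 α x) :=
            Finset.sum_le_sum fun x _ => gibbs_term (h2n x) (hmn x)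
              (fun hx => (mix_eq_zero' h1n h2n hα hx).2)
          have hsum1 : ∑ x ∈ Finset.univ.erase x0, P2 x = 1 - P2 x0 := by
            rw [Finset.sum_erase_eq_sub (Finset.mem_univ x0), h2s]
          have hsum2 : ∑ x ∈ Finset.univ.erase x0, mix P1 P2 α x =
              1 - mix P1 P2 α x0 := by
            rw [Finset.sum_erase_eq_sub (Finset.mem_univ x0), hms]
          have hsum3 : ∑ x ∈ Finset.univ.erase x0, (P2 x - mix P1 P2 α x) =
              mix P1 P2 α x0 - P2 x0 := by
            rw [Finset.sum_sub_distrib, hsum1, hsum2]; ring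
          have hGJS : GJS P1 P2 α = α * klDivR P1 (mix P1 P2 α) +
              klDivR P2 (mix P1 P2 α) := rfl
          have hmx0 : 0 ≤ mix P1 P2 α x0 := hmn x0
          nlinarith [mul_nonneg hα.le d1]
      rw [EReal.tendsto_nhds_top_iff_real]
      intro r
      filter_upwards [hT.eventually_gt_atTop r] with α hα
      exact EReal.coe_lt_coe_iff.mpr hα

end Classification
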